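/- arXiv:1401.0648 — 8 statements merged into one kernel-verified Lean document; each statement's English description precedes it below -/
import Mathlib

section
/- If every finite subset of an s-theory Γ is satisfiable by some frame, then Γ itself is satisfiable by some frame. -/
inductive PForm (σ : Type) : Type
  | var : σ → PForm σ
  | neg : PForm σ → PForm σ
  | conj : PForm σ → PForm σ → PForm σ
  | disj : PForm σ → PForm σ → PForm σ
  | impl : PForm σ → PForm σ → PForm σ

def PForm.eval {σ : Type} (w : σ → Bool) : PForm σ → Bool
  | .var x => w x
  | .neg A => !(A.eval w)
  | .conj A B => A.eval w && B.eval w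
  | .disj A B => A.eval w || B.eval w
  | .impl A B => !(A.eval w) || B.eval w

/-- s-formulas: strict implication `si A B` (A ⥽ B) and strict nonimplication `sn A B` (A ⋢ B). -/
inductive SForm (σ : Type) : Type
  | si : PForm σ → PForm σ → SForm σ
  | sn : PForm σ → PForm σ → SForm σ

/-- A frame (a set of valuations; nonemptiness stated separately) satisfies an s-formula. -/
def SForm.sat {σ : Type} (R : Set (σ → Bool)) : SForm σ → Prop
  | .si A B => ∀ w ∈ R, A.eval w = true → B.eval w = true
  | .sn A B => ∃ w ∈ R, A.eval w = true ∧ B.eval w = false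

/-- Strict negation: swaps ⥽ and ⋢. -/
def SForm.sneg {σ : Type} : SForm σ → SForm σ
  | .si A B => .sn A B
  | .sn A B => .si A B

lemma evalCont {σ : Type} (A : PForm σ) : Continuous fun w : σ → Bool => A.eval w := by
  induction A with
  | var x => exact continuous_apply x
  | neg A ih =>
      exact (continuous_of_discreteTopology (f := fun b : Bool => !b)).comp ih
  | conj A B ihA ihB =>
      exact (continuous_of_discreteTopology (f := fun p : Bool × Bool => p.1 && p.2)).comp
        (ihA.prodMk ihB)
  | disj A B ihA ihB =>
      exact (continuous_of_discreteTopology (f := fun p : Bool × Bool => p.1 || p.2)).comp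
        (ihA.prodMk ihB)
  | impl A B ihA ihB =>
      exact (continuous_of_discreteTopology (f := fun p : Bool × Bool => !p.1 || p.2)).comp
        (ihA.prodMk ihB)

lemma closedEval {σ : Type} (A : PForm σ) (b : Bool) :
    IsClosed {w : σ → Bool | A.eval w = b} :=
  (isClosed_discrete {b}).preimage (evalCont A)

def CSet {σ : Type} : SForm σ → Set (σ → Bool)
  | .si A B => {w | A.eval w = true → B.eval w = true}
  | .sn A B => {w | A.eval w = true ∧ B.eval w = false}

lemma closedCSet {σ : Type} (φ : SForm σ) : IsClosed (CSet φ) := by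
  cases φ with
  | si A B =>
      have : CSet (.si A B) =
          {w : σ → Bool | A.eval w = false} ∪ {w | B.eval w = true} := by
        ext w
        simp only [CSet, Set.mem_setOf_eq, Set.mem_union]
        cases hA : A.eval w <;> simp
      rw [this]; exact (closedEval A false).union (closedEval B true)
  | sn A B =>
      exact (closedEval A true).inter (closedEval B false)

theorem stmt0 {σ : Type} [Infinite σ] (Γ : Set (SForm σ))
    (h : ∀ Δ ⊆ Γ, Δ.Finite → ∃ R : Set (σ → Bool), R.Nonempty ∧ ∀ φ ∈ Δ, φ.sat R) :
    ∃ R : Set (σ → Bool), R.Nonempty ∧ ∀ φ ∈ Γ, φ.sat R := by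
  classical
  let ι := {φ : SForm σ // φ ∈ Γ ∧ ∃ A B, φ = SForm.si A B}
  set R : Set (σ → Bool) := ⋂ i : ι, CSet i.val with hR
  -- helper: any closed T meeting all finite subfamilies meets R
  have key : ∀ T : Set (σ → Bool), IsClosed T →
      (∀ u : Finset ι, (T ∩ ⋂ i ∈ u, CSet i.val).Nonempty) → (T ∩ R).Nonempty := by
    intro T hTc hfin
    exact hTc.isCompact.inter_iInter_nonempty _ (fun i => closedCSet i.val) hfin
  -- members of u lie in Δ-satisfying frames
  have mem_CSet_of_sat : ∀ (R' : Set (σ → Bool)) (w : σ → Bool), w ∈ R' →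
      ∀ i : ι, SForm.sat R' i.val → w ∈ CSet i.val := by
    rintro R' w hw ⟨φ, hφΓ, A, B, rfl⟩ hsat
    exact fun hA => hsat w hw hA
  have finStep : ∀ (T₀ : Set (SForm σ)), T₀ ⊆ Γ → T₀.Finite →
      ∀ u : Finset ι, ∃ R' : Set (σ → Bool), R'.Nonempty ∧
        (∀ φ ∈ T₀, SForm.sat R' φ) ∧ ∀ w ∈ R', ∀ i ∈ u, w ∈ CSet (i : ι).val := by
    intro T₀ hT₀ hT₀f u
    have hΔ : (T₀ ∪ (↑(u.image Subtype.val) : Set (SForm σ))) ⊆ Γ := by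
      rintro φ (hφ | hφ)
      · exact hT₀ hφ
      · simp only [Finset.coe_image, Set.mem_image, Finset.mem_coe] at hφ
        obtain ⟨i, _, rfl⟩ := hφ
        exact i.2.1
    obtain ⟨R', hR'ne, hR'sat⟩ := h _ hΔ (hT₀f.union (u.image Subtype.val).finite_toSet)
    refine ⟨R', hR'ne, fun φ hφ => hR'sat φ (Or.inl hφ), fun w hw i hi => ?_⟩
    refine mem_CSet_of_sat R' w hw i (hR'sat i.val (Or.inr ?_))
    simp only [Finset.coe_image, Set.mem_image, Finset.mem_coe]
    exact ⟨i, hi, rfl⟩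
  -- R is nonempty
  have hRne : R.Nonempty := by
    have := key Set.univ isClosed_univ (fun u => by
      obtain ⟨R', ⟨w, hw⟩, _, hall⟩ := finStep ∅ (Set.empty_subset _) Set.finite_empty u
      exact ⟨w, Set.mem_univ w, Set.mem_iInter₂.2 fun i hi => hall w hw i hi⟩)
    obtain ⟨w, _, hw⟩ := this
    exact ⟨w, hw⟩
  refine ⟨R, hRne, fun φ hφ => ?_⟩
  cases φ with
  | si A B =>
      intro w hw hA
      have : w ∈ CSet (SForm.si A B) :=
        Set.mem_iInter.1 hw ⟨SForm.si A B, hφ, A, B, rfl⟩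
      exact this hA
  | sn A B =>
      have := key (CSet (SForm.sn A B)) (closedCSet _) (fun u => by
        obtain ⟨R', hR'ne, hsat, hall⟩ :=
          finStep {SForm.sn A B} (Set.singleton_subset_iff.2 hφ) (Set.finite_singleton _) u
        obtain ⟨w, hwR', hwA, hwB⟩ := hsat (SForm.sn A B) rfl
        exact ⟨w, ⟨hwA, hwB⟩, Set.mem_iInter₂.2 fun i hi => hall w hwR' i hi⟩)
      obtain ⟨w, hwC, hwR⟩ := this
      exact ⟨w, hwR, hwC.1, hwC.2⟩
end

section
/- Soundness of the F₁ deductive system: if φ is derivable from a set Γ of F₁-formulas using the rules (I) derive X ⥽ X; (HS) from X ⥽ Y and Y ⥽ Z derive X ⥽ Z; (N) from X ⋢ Y, X ⥽ W, and Z ⥽ Y derive W ⋢ Z; then every frame satisfying Γ satisfies φ. -/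
/-- F₁-formulas: strict implications `imp X Y` (X ⥽ Y) and nonimplications `nimp X Y` (X ⋢ Y)
between single propositional variables. -/
inductive F1 (σ : Type) : Type
  | imp : σ → σ → F1 σ
  | nimp : σ → σ → F1 σ

/-- A frame satisfies an F₁-formula. -/
def F1.sat {σ : Type} (R : Set (σ → Bool)) : F1 σ → Prop
  | .imp X Y => ∀ w ∈ R, w X = true → w Y = true
  | .nimp X Y => ∃ w ∈ R, w X = true ∧ w Y = false

/-- Derivability in the F₁ deductive system: rules (I), (HS), (N). -/
inductive Der1 {σ : Type} (Γ : Set (F1 σ)) : F1 σ → Prop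
  | mem {φ : F1 σ} : φ ∈ Γ → Der1 Γ φ
  | I (X : σ) : Der1 Γ (.imp X X)
  | HS {X Y Z : σ} : Der1 Γ (.imp X Y) → Der1 Γ (.imp Y Z) → Der1 Γ (.imp X Z)
  | N {W X Y Z : σ} : Der1 Γ (.nimp X Y) → Der1 Γ (.imp X W) → Der1 Γ (.imp Z Y) →
      Der1 Γ (.nimp W Z)

theorem stmt5 {σ : Type} (Γ : Set (F1 σ)) (φ : F1 σ) (h : Der1 Γ φ)
    (R : Set (σ → Bool)) (hR : R.Nonempty) (hΓ : ∀ ψ ∈ Γ, ψ.sat R) :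
    φ.sat R := by
  induction h with
  | mem hm => exact hΓ _ hm
  | I X => intro w _ hw; exact hw
  | HS _ _ ih1 ih2 => intro w hw hX; exact ih2 w hw (ih1 w hw hX)
  | N _ _ _ ihn ih1 ih2 =>
      obtain ⟨w, hw, hX, hY⟩ := ihn
      refine ⟨w, hw, ih1 w hw hX, ?_⟩
      by_contra hws
      simp only [Bool.not_eq_false] at hws
      rw [ih2 w hw hws] at hY
      simp at hY
end

section
/- Completeness of the F₁ deductive system: if Γ is a consistent (i.e., satisfiable by some frame) set of F₁-formulas, φ is an F₁-formula, and every frame satisfying Γ satisfies φ, then φ is derivable from Γ using rules (I), (HS), and (N). -/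
/-- Soundness of the F₁ system. -/
lemma Der1.sound {σ : Type} {Γ : Set (F1 σ)} {ψ : F1 σ} (h : Der1 Γ ψ)
    (R : Set (σ → Bool)) (hΓ : ∀ χ ∈ Γ, χ.sat R) : ψ.sat R := by
  induction h with
  | mem h => exact hΓ _ h
  | I X => intro w _ h; exact h
  | HS h1 h2 ih1 ih2 => intro w hw h; exact ih2 w hw (ih1 w hw h)
  | N hn h1 h2 ihn ih1 ih2 =>
    obtain ⟨w, hw, hA, hB⟩ := ihn
    refine ⟨w, hw, ih1 w hw hA, ?_⟩
    cases hZ : w _ with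
    | false => rfl
    | true => rw [ih2 w hw hZ] at hB; exact absurd hB (by simp)

theorem stmt6 {σ : Type} [Infinite σ] (Γ : Set (F1 σ)) (φ : F1 σ)
    (hcons : ∃ R : Set (σ → Bool), R.Nonempty ∧ ∀ ψ ∈ Γ, ψ.sat R)
    (hsem : ∀ R : Set (σ → Bool), R.Nonempty → (∀ ψ ∈ Γ, ψ.sat R) → φ.sat R) :
    Der1 Γ φ := by
  classical
  -- consistency: not both `imp A B` and `nimp A B` derivable
  have hnc : ∀ A B : σ, Der1 Γ (.nimp A B) → ¬ Der1 Γ (.imp A B) := by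
    intro A B h1 h2
    obtain ⟨R, _, hΓ⟩ := hcons
    obtain ⟨w, hw, hA, hB⟩ := h1.sound R hΓ
    rw [h2.sound R hΓ w hw hA] at hB
    exact absurd hB (by simp)
  -- canonical worlds
  let wplus : σ → σ → Bool := fun A V => decide (Der1 Γ (.imp A V))
  let wminus : σ → σ → Bool := fun B V => decide (¬ Der1 Γ (.imp V B))
  have wplus_closed : ∀ A V W, Der1 Γ (.imp V W) → wplus A V = true → wplus A W = true := by
    intro A V W h hv
    simp only [wplus, decide_eq_true_eq] at hv ⊢
    exact hv.HS h
  have wminus_closed : ∀ B V W, Der1 Γ (.imp V W) → wminus B V = true → wminus B W = true := by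
    intro B V W h hv
    simp only [wminus, decide_eq_true_eq] at hv ⊢
    exact fun hw => hv (h.HS hw)
  cases φ with
  | imp X Y =>
    by_contra hnd
    set u : σ → Bool := fun V => decide (Der1 Γ (.imp X V)) with hu
    set R : Set (σ → Bool) :=
      {u} ∪ {w | ∃ A B, F1.nimp A B ∈ Γ ∧ w = wplus A} with hR
    have hΓR : ∀ χ ∈ Γ, χ.sat R := by
      intro χ hχ
      cases χ with
      | imp V W =>
        intro w hw hv
        rcases hw with hw | ⟨A, B, _, rfl⟩
        · rw [hw] at hv ⊢
          exact wplus_closed X V W (Der1.mem hχ) hv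
        · exact wplus_closed A V W (Der1.mem hχ) hv
      | nimp V W =>
        refine ⟨wplus V, Or.inr ⟨V, W, hχ, rfl⟩, ?_, ?_⟩
        · simpa [wplus] using Der1.I (Γ := Γ) V
        · simpa [wplus] using hnc V W (Der1.mem hχ)
    have := hsem R ⟨u, Or.inl rfl⟩ hΓR u (Or.inl rfl)
      (by simpa [hu] using Der1.I (Γ := Γ) X)
    rw [hu] at this
    exact hnd (by simpa using this)
  | nimp X Y =>
    by_contra hnd
    let wsel : σ → σ → σ → Bool := fun A B =>
      if Der1 Γ (.imp Y B) then wplus A else wminus B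
    set R : Set (σ → Bool) :=
      {fun _ => true} ∪ {w | ∃ A B, F1.nimp A B ∈ Γ ∧ w = wsel A B} with hR
    have hΓR : ∀ χ ∈ Γ, χ.sat R := by
      intro χ hχ
      cases χ with
      | imp V W =>
        intro w hw hv
        rcases hw with hw | ⟨A, B, _, rfl⟩
        · rw [hw]
        · simp only [wsel] at hv ⊢
          split at hv
          · rw [if_pos ‹_›]; exact wplus_closed A V W (Der1.mem hχ) hv
          · rw [if_neg ‹_›]; exact wminus_closed B V W (Der1.mem hχ) hv
      | nimp V W =>
        refine ⟨wsel V W, Or.inr ⟨V, W, hχ, rfl⟩, ?_, ?_⟩ <;>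
        · simp only [wsel]
          split
          · simp only [wplus, decide_eq_true_eq, decide_eq_false_iff_not]
            first
              | exact Der1.I V
              | exact hnc V W (Der1.mem hχ)
          · simp only [wminus, decide_eq_true_eq, decide_eq_false_iff_not, not_not]
            first
              | exact hnc V W (Der1.mem hχ)
              | exact Der1.I W
    obtain ⟨w, hw, hX, hY⟩ := hsem R ⟨_, Or.inl rfl⟩ hΓR
    rcases hw with hw | ⟨A, B, hAB, rfl⟩
    · rw [hw] at hY; exact absurd hY (by simp)
    · simp only [wsel] at hX hY
      by_cases hYB : Der1 Γ (.imp Y B)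
      · rw [if_pos hYB] at hX
        simp only [wplus, decide_eq_true_eq] at hX
        exact hnd (Der1.N (Der1.mem hAB) hX hYB)
      · rw [if_neg hYB] at hY
        simp only [wminus, decide_eq_false_iff_not, not_not] at hY
        exact hYB hY
end

section
/- For a consistent F₁ s-theory Γ and F₁-formula φ, φ is a strict consequence of Γ if and only if φ is derivable from Γ using rules (I), (HS), and (N). -/
open Classical

/-- Soundness. -/
theorem der1_sound {σ : Type} {Γ : Set (F1 σ)} {φ : F1 σ} (h : Der1 Γ φ)
    (R : Set (σ → Bool)) (hR : ∀ ψ ∈ Γ, ψ.sat R) : φ.sat R := by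
  induction h with
  | mem h => exact hR _ h
  | I X => intro w hw hx; exact hx
  | HS h1 h2 ih1 ih2 => intro w hw hx; exact ih2 w hw (ih1 w hw hx)
  | N h1 h2 h3 ih1 ih2 ih3 =>
    obtain ⟨w, hw, hx, hy⟩ := ih1
    refine ⟨w, hw, ih2 w hw hx, ?_⟩
    cases hz : w _ with
    | false => rfl
    | true => simp [ih3 w hw hz] at hy

theorem stmt7 {σ : Type} [Infinite σ] (Γ : Set (F1 σ)) (φ : F1 σ)
    (hcons : ∃ R : Set (σ → Bool), R.Nonempty ∧ ∀ ψ ∈ Γ, ψ.sat R) :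
    (∀ R : Set (σ → Bool), R.Nonempty → (∀ ψ ∈ Γ, ψ.sat R) → φ.sat R) ↔ Der1 Γ φ := by
  classical
  obtain ⟨R0, hR0ne, hR0⟩ := hcons
  -- no self-nonimplication is derivable
  have hnself : ∀ Y : σ, ¬ Der1 Γ (F1.nimp Y Y) := by
    intro Y hd
    obtain ⟨w, _, h1, h2⟩ := der1_sound hd R0 hR0
    simp [h1] at h2
  -- if nimp X Y ∈ Γ then imp X Y is not derivable
  have hkey : ∀ X Y : σ, F1.nimp X Y ∈ Γ → ¬ Der1 Γ (F1.imp X Y) := by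
    intro X Y hmem hd
    exact hnself Y (Der1.N (Der1.mem hmem) hd (Der1.I Y))
  constructor
  · intro hsem
    cases φ with
    | imp A B =>
      -- canonical frame of all derivationally closed valuations
      set R : Set (σ → Bool) :=
        {w | ∀ U V : σ, Der1 Γ (F1.imp U V) → w U = true → w V = true} with hRdef
      have htrue : (fun _ : σ => true) ∈ R := by intro U V _ _; rfl
      have hclosed : ∀ X : σ, (fun V => decide (Der1 Γ (F1.imp X V))) ∈ R := by
        intro X U V hUV hU
        simp only [decide_eq_true_eq] at hU ⊢
        exact Der1.HS hU hUV
      have hRsat : ∀ ψ ∈ Γ, ψ.sat R := by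
        intro ψ hψ
        cases ψ with
        | imp U V => exact fun w hw hU => hw U V (Der1.mem hψ) hU
        | nimp X Y =>
          refine ⟨fun V => decide (Der1 Γ (F1.imp X V)), hclosed X, ?_, ?_⟩
          · simp [Der1.I]
          · simp [hkey X Y hψ]
      have := hsem R ⟨_, htrue⟩ hRsat (fun V => decide (Der1 Γ (F1.imp A V)))
        (hclosed A) (by simp [Der1.I])
      simpa using this
    | nimp A B =>
      by_contra hnd
      have hkey2 : ∀ X Y : σ, F1.nimp X Y ∈ Γ →
          ¬ (Der1 Γ (F1.imp X A) ∧ Der1 Γ (F1.imp B Y)) := by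
        rintro X Y hmem ⟨h1, h2⟩
        exact hnd (Der1.N (Der1.mem hmem) h1 h2)
      set R : Set (σ → Bool) :=
        {w | (∀ U V : σ, Der1 Γ (F1.imp U V) → w U = true → w V = true) ∧
          (w A = true → w B = true)} with hRdef
      have htrue : (fun _ : σ => true) ∈ R := ⟨fun U V _ _ => rfl, fun _ => rfl⟩
      have hRsat : ∀ ψ ∈ Γ, ψ.sat R := by
        intro ψ hψ
        cases ψ with
        | imp U V => exact fun w hw hU => hw.1 U V (Der1.mem hψ) hU
        | nimp X Y =>
          by_cases hXA : Der1 Γ (F1.imp X A)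
          · have hBY : ¬ Der1 Γ (F1.imp B Y) := fun h => hkey2 X Y hψ ⟨hXA, h⟩
            refine ⟨fun V => decide (Der1 Γ (F1.imp X V) ∨ Der1 Γ (F1.imp B V)), ⟨?_, ?_⟩, ?_, ?_⟩
            · intro U V hUV hU
              simp only [decide_eq_true_eq] at hU ⊢
              exact hU.imp (fun h => Der1.HS h hUV) (fun h => Der1.HS h hUV)
            · intro _; simp [Der1.I]
            · simp [Der1.I]
            · simp [hkey X Y hψ, hBY]
          · refine ⟨fun V => decide (Der1 Γ (F1.imp X V)), ⟨?_, ?_⟩, ?_, ?_⟩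
            · intro U V hUV hU
              simp only [decide_eq_true_eq] at hU ⊢
              exact Der1.HS hU hUV
            · intro hA; simp [hXA] at hA
            · simp [Der1.I]
            · simp [hkey X Y hψ]
      obtain ⟨w, hw, hA, hB⟩ := hsem R ⟨_, htrue⟩ hRsat
      simp [hw.2 hA] at hB
  · intro hd R hne hsat
    exact der1_sound hd R hsat
end

section
/- Soundness of the F₂ deductive system: if φ is derivable from a set Γ of F₂-formulas using rules (I), (W), (HS), and (N), then every frame satisfying Γ satisfies φ. -/
/-- F₂-formulas: `imp A Y` is the strict implication `A ⥽ Y` and `nimp A Y` the strict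
nonimplication `A ⋢ Y`, where `A` is a conjunction of propositional variables
(modeled as a finite set, required nonempty via `F2.ok`) and `Y` a single variable. -/
inductive F2 (σ : Type) : Type
  | imp : Finset σ → σ → F2 σ
  | nimp : Finset σ → σ → F2 σ

/-- An F₂-formula is well formed when its conjunction of hypotheses is nonempty. -/
def F2.ok {σ : Type} : F2 σ → Prop
  | .imp A _ => A.Nonempty
  | .nimp A _ => A.Nonempty

/-- A frame satisfies an F₂-formula. -/
def F2.sat {σ : Type} (R : Set (σ → Bool)) : F2 σ → Prop
  | .imp A Y => ∀ w ∈ R, (∀ x ∈ A, w x = true) → w Y = true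
  | .nimp A Y => ∃ w ∈ R, (∀ x ∈ A, w x = true) ∧ w Y = false

/-- Derivability in the F₂ deductive system: rules (I), (W), (HS), (N). -/
inductive Der2 {σ : Type} [DecidableEq σ] (Γ : Set (F2 σ)) : F2 σ → Prop
  | mem {φ : F2 σ} : φ ∈ Γ → Der2 Γ φ
  | I (X : σ) : Der2 Γ (.imp {X} X)
  | W {A B : Finset σ} {Y : σ} : Der2 Γ (.imp A Y) → A ⊆ B → Der2 Γ (.imp B Y)
  | HS {A B : Finset σ} {X Y : σ} : Der2 Γ (.imp (insert X B) Y) → Der2 Γ (.imp A X) →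
      Der2 Γ (.imp (A ∪ B) Y)
  | N {A B : Finset σ} {X Z : σ} : B.Nonempty → Der2 Γ (.nimp A X) →
      Der2 Γ (.imp (insert Z A) X) → (∀ Y ∈ B, Der2 Γ (.imp A Y)) →
      Der2 Γ (.nimp B Z)

theorem stmt8 {σ : Type} [DecidableEq σ] (Γ : Set (F2 σ)) (hok : ∀ ψ ∈ Γ, ψ.ok)
    (φ : F2 σ) (h : Der2 Γ φ)
    (R : Set (σ → Bool)) (hR : R.Nonempty) (hΓ : ∀ ψ ∈ Γ, ψ.sat R) :
    φ.sat R := by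
  induction h with
  | mem hm => exact hΓ _ hm
  | I X => intro w _ hw; exact hw X (Finset.mem_singleton_self X)
  | W _ hAB ih => intro w hwR hw; exact ih w hwR fun x hx => hw x (hAB hx)
  | HS _ _ ih1 ih2 =>
      intro w hwR hw
      refine ih1 w hwR fun x hx => ?_
      rcases Finset.mem_insert.mp hx with h | h
      · subst h; exact ih2 w hwR fun y hy => hw y (Finset.mem_union_left _ hy)
      · exact hw x (Finset.mem_union_right _ h)
  | N hB _ _ _ ihA ihZA ihB =>
      obtain ⟨w, hwR, hwA, hwX⟩ := ihA
      refine ⟨w, hwR, fun y hy => ihB y hy w hwR hwA, ?_⟩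
      by_contra h
      have hZ : w _ = true := Bool.not_eq_false _ |>.mp h
      have := ihZA w hwR fun x hx => by
        rcases Finset.mem_insert.mp hx with h' | h'
        · subst h'; exact hZ
        · exact hwA x h'
      simp [this] at hwX
end

section
/- Completeness of the F₂ deductive system: if Γ is a consistent set of F₂-formulas, φ is an F₂-formula, and every frame satisfying Γ satisfies φ, then φ is derivable from Γ using rules (I), (W), (HS), and (N). -/
section Aux

variable {σ : Type} [DecidableEq σ] {Γ : Set (F2 σ)}

/-- Soundness of the F₂ rules. -/
theorem der2_sound {φ : F2 σ} (h : Der2 Γ φ) (R : Set (σ → Bool))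
    (hR : ∀ ψ ∈ Γ, ψ.sat R) : φ.sat R := by
  induction h with
  | mem hm => exact hR _ hm
  | I X => exact fun w _ hw => hw X (Finset.mem_singleton_self X)
  | W hd hsub ih => exact fun w hwR hw => ih w hwR (fun x hx => hw x (hsub hx))
  | HS hd1 hd2 ih1 ih2 =>
      intro w hwR hw
      apply ih1 w hwR
      intro x hx
      rcases Finset.mem_insert.mp hx with rfl | hx
      · exact ih2 w hwR (fun y hy => hw y (Finset.mem_union_left _ hy))
      · exact hw x (Finset.mem_union_right _ hx)
  | N hB hd1 hd2 hd3 ih1 ih2 ih3 =>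
      obtain ⟨w, hwR, hwA, hwX⟩ := ih1
      refine ⟨w, hwR, fun y hy => ih3 y hy w hwR hwA, ?_⟩
      by_contra hz
      have hz' : w _ = true := Bool.not_eq_false _ |>.mp hz
      have : w _ = true := ih2 w hwR (by
        intro x hx
        rcases Finset.mem_insert.mp hx with rfl | hx
        · exact hz'
        · exact hwA x hx)
      rw [hwX] at this; exact Bool.false_ne_true this

theorem der2_of_mem {A : Finset σ} {x : σ} (hx : x ∈ A) : Der2 Γ (.imp A x) :=
  (Der2.I x).W (Finset.singleton_subset_iff.mpr hx)

/-- Cut: if `A ∪ B ⊢ Z` and every member of `B` follows from `A`, then `A ⊢ Z`. -/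
theorem der2_cut {A : Finset σ} {Z : σ} :
    ∀ (B : Finset σ), Der2 Γ (.imp (A ∪ B) Z) → (∀ x ∈ B, Der2 Γ (.imp A x)) →
      Der2 Γ (.imp A Z) := by
  intro B
  induction B using Finset.induction_on with
  | empty => intro hd _; simpa using hd
  | insert _ _ hx ih =>
      rename_i a B'
      intro hd h
      have h1 : Der2 Γ (.imp (insert a (A ∪ B')) Z) := by
        rwa [Finset.union_insert] at hd
      have h2 : Der2 Γ (.imp (A ∪ (A ∪ B')) Z) := h1.HS (h a (Finset.mem_insert_self a B'))
      have h3 : Der2 Γ (.imp (A ∪ B') Z) := by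
        rwa [← Finset.union_assoc, Finset.union_self] at h2
      exact ih h3 (fun x hx => h x (Finset.mem_insert_of_mem hx))

/-- A set `S` of variables derives `z` if some finite subset strictly implies it. -/
def DerS (Γ : Set (F2 σ)) (S : Set σ) (z : σ) : Prop :=
  ∃ C : Finset σ, ↑C ⊆ S ∧ Der2 Γ (.imp C z)

theorem derS_cut {S : Set σ} {z e : σ} (h1 : DerS Γ (insert z S) e)
    (h2 : DerS Γ S z) : DerS Γ S e := by
  obtain ⟨C, hC, hd1⟩ := h1
  obtain ⟨D, hD, hd2⟩ := h2
  have hd1' : Der2 Γ (.imp (insert z (C.erase z)) e) := by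
    refine hd1.W ?_
    intro x hx
    by_cases hxz : x = z
    · subst hxz; exact Finset.mem_insert_self _ _
    · exact Finset.mem_insert_of_mem (Finset.mem_erase.mpr ⟨hxz, hx⟩)
  have hd3 : Der2 Γ (.imp (D ∪ C.erase z) e) := hd1'.HS hd2
  refine ⟨D ∪ C.erase z, ?_, hd3⟩
  intro x hx
  rcases Finset.mem_union.mp (by exact_mod_cast hx) with hx | hx
  · exact hD hx
  · have hx' := Finset.mem_erase.mp hx
    rcases hC hx'.2 with h | h
    · exact absurd h hx'.1
    · exact h

/-- Existence of a maximal theory extending `A` avoiding each element of `E`. -/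
theorem exists_max_theory (A E : Set σ) (hA : ∀ e ∈ E, ¬ DerS Γ A e) :
    ∃ T : Set σ, A ⊆ T ∧ (∀ e ∈ E, e ∉ T) ∧ (∀ z, DerS Γ T z → z ∈ T) := by
  classical
  set 𝒮 : Set (Set σ) := {T | A ⊆ T ∧ ∀ e ∈ E, ¬ DerS Γ T e} with h𝒮
  have hchain : ∀ c ⊆ 𝒮, IsChain (fun x1 x2 => x1 ⊆ x2) c → c.Nonempty →
      ∃ ub ∈ 𝒮, ∀ s ∈ c, s ⊆ ub := by
    intro c hc hch ⟨t0, ht0⟩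
    refine ⟨⋃₀ c, ⟨(hc ht0).1.trans (Set.subset_sUnion_of_mem ht0), ?_⟩,
      fun s hs => Set.subset_sUnion_of_mem hs⟩
    intro e he ⟨C, hC, hd⟩
    -- find a single member of the chain containing C
    have key : ∀ C : Finset σ, ↑C ⊆ ⋃₀ c → ∃ t ∈ c, ↑C ⊆ t := by
      intro C
      induction C using Finset.induction_on with
      | empty => intro _; exact ⟨t0, ht0, by simp⟩
      | insert _ _ hx ih =>
          rename_i a C'
          intro hsub
          obtain ⟨t1, ht1, hsub1⟩ := ih (fun x hx => hsub (by
            exact_mod_cast Finset.mem_insert_of_mem (by exact_mod_cast hx)))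
          obtain ⟨t2, ht2, ha2⟩ := hsub (by exact_mod_cast Finset.mem_insert_self a C')
          rcases hch.total ht1 ht2 with h | h
          · refine ⟨t2, ht2, ?_⟩
            intro x hx
            rcases Finset.mem_insert.mp (by exact_mod_cast hx) with rfl | hx
            · exact ha2
            · exact h (hsub1 (by exact_mod_cast hx))
          · refine ⟨t1, ht1, ?_⟩
            intro x hx
            rcases Finset.mem_insert.mp (by exact_mod_cast hx) with rfl | hx
            · exact h ha2
            · exact hsub1 (by exact_mod_cast hx)
    obtain ⟨t, htc, hCt⟩ := key C hC
    exact (hc htc).2 e he ⟨C, hCt, hd⟩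
  have hA𝒮 : A ∈ 𝒮 := ⟨subset_rfl, hA⟩
  obtain ⟨T, hAT, hTmax⟩ := zorn_subset_nonempty 𝒮 hchain A hA𝒮
  have hT𝒮 := hTmax.prop
  refine ⟨T, hT𝒮.1, ?_, ?_⟩
  · intro e he heT
    exact hT𝒮.2 e he ⟨{e}, by simpa using heT, Der2.I e⟩
  · intro z hz
    by_contra hzT
    have hins : insert z T ∈ 𝒮 := by
      refine ⟨hT𝒮.1.trans (Set.subset_insert z T), ?_⟩
      intro e he hde
      exact hT𝒮.2 e he (derS_cut hde hz)
    have := hTmax.eq_of_subset hins (Set.subset_insert z T)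
    exact hzT (this ▸ Set.mem_insert z T)

end Aux
theorem stmt9 {σ : Type} [DecidableEq σ] [Infinite σ]
    (Γ : Set (F2 σ)) (hok : ∀ ψ ∈ Γ, ψ.ok) (φ : F2 σ) (hφ : φ.ok)
    (hcons : ∃ R : Set (σ → Bool), R.Nonempty ∧ ∀ ψ ∈ Γ, ψ.sat R)
    (hsem : ∀ R : Set (σ → Bool), R.Nonempty → (∀ ψ ∈ Γ, ψ.sat R) → φ.sat R) :
    Der2 Γ φ := by
  classical
  obtain ⟨R0, hR0ne, hR0⟩ := hcons
  cases φ with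
  | imp A Y =>
      set wA : σ → Bool := fun x => decide (Der2 Γ (.imp A x)) with hwA
      set R : Set (σ → Bool) := {w | ∀ (B : Finset σ) (Z : σ), F2.imp B Z ∈ Γ →
        (∀ x ∈ B, w x = true) → w Z = true} with hRdef
      have hRΓ : ∀ ψ ∈ Γ, ψ.sat R := by
        intro ψ hψ
        cases ψ with
        | imp B Z => exact fun w hw hB => hw B Z hψ hB
        | nimp C X =>
            obtain ⟨w, hwR0, hwC, hwX⟩ := hR0 _ hψ
            exact ⟨w, fun B Z hBZ hB => hR0 _ hBZ w hwR0 hB, hwC, hwX⟩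
      have hRne : R.Nonempty := ⟨fun _ => true, fun _ _ _ _ => rfl⟩
      have hwAR : wA ∈ R := by
        intro B Z hBZ hB
        have hall : ∀ x ∈ B, Der2 Γ (.imp A x) := by
          intro x hx
          simpa [hwA] using hB x hx
        have : Der2 Γ (.imp A Z) :=
          der2_cut B ((Der2.mem hBZ).W Finset.subset_union_right) hall
        simp [hwA, this]
      have hAtrue : ∀ x ∈ A, wA x = true := by
        intro x hx; simp [hwA, der2_of_mem hx]
      have := hsem R hRne hRΓ wA hwAR hAtrue
      simpa [hwA] using this
  | nimp B Z =>
      by_cases hforce : ∃ A X, F2.nimp A X ∈ Γ ∧ Der2 Γ (.imp (insert Z A) X) ∧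
          ∀ Y ∈ B, Der2 Γ (.imp A Y)
      · obtain ⟨A, X, h1, h2, h3⟩ := hforce
        exact Der2.N hφ (Der2.mem h1) h2 h3
      · exfalso
        push_neg at hforce
        set R : Set (σ → Bool) := {w | (∀ (C : Finset σ) (z : σ), Der2 Γ (.imp C z) →
            (∀ x ∈ C, w x = true) → w z = true) ∧
            ((∀ y ∈ B, w y = true) → w Z = true)} with hRdef
        have hconst : (fun _ => true) ∈ R := ⟨fun _ _ _ _ => rfl, fun _ => rfl⟩
        have hRΓ : ∀ ψ ∈ Γ, ψ.sat R := by
          intro ψ hψ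
          cases ψ with
          | imp C z => exact fun w hw hC => hw.1 C z (Der2.mem hψ) hC
          | nimp A X =>
              have hnotdX : ¬ Der2 Γ (.imp A X) := by
                intro hd
                obtain ⟨w, hw, hwA, hwX⟩ := hR0 _ hψ
                have := der2_sound hd R0 hR0 w hw hwA
                rw [hwX] at this; exact Bool.false_ne_true this
              -- build a maximal theory `T` and its valuation
              suffices hT : ∃ T : Set σ, ↑A ⊆ T ∧ X ∉ T ∧ (∀ z, DerS Γ T z → z ∈ T) ∧
                  (Z ∈ T ∨ ∃ Y ∈ B, Y ∉ T) by
                obtain ⟨T, hAT, hXT, hTcl, hextra⟩ := hT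
                set w : σ → Bool := fun x => decide (x ∈ T) with hw
                have hwmem : ∀ x ∈ T, w x = true := fun x hx => by simp [hw, hx]
                have hwR : w ∈ R := by
                  constructor
                  · intro C z hd hC
                    have : z ∈ T := hTcl z ⟨C, fun x hx => by
                      simpa [hw] using hC x (by exact_mod_cast hx), hd⟩
                    simp [hw, this]
                  · intro hB
                    rcases hextra with hZT | ⟨Y, hYB, hYT⟩
                    · simp [hw, hZT]
                    · exact absurd (by simpa [hw] using hB Y hYB) hYT
                exact ⟨w, hwR, fun x hx => hwmem x (hAT (by exact_mod_cast hx)),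
                  by simp [hw, hXT]⟩
              rcases Classical.em (Der2 Γ (.imp (insert Z A) X)) with hZA | hZA
              · -- then some Y ∈ B is not derivable from A
                obtain ⟨Y, hYB, hY⟩ := hforce A X hψ hZA
                obtain ⟨T, hAT, hE, hTcl⟩ := exists_max_theory (Γ := Γ) ↑A {X, Y} (by
                  intro e he ⟨C, hC, hd⟩
                  have hd' := hd.W (Finset.coe_subset.mp hC)
                  rcases he with rfl | rfl
                  · exact hnotdX hd'
                  · exact hY hd')
                exact ⟨T, hAT, hE X (Or.inl rfl), hTcl,
                  Or.inr ⟨Y, hYB, hE Y (Or.inr rfl)⟩⟩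
              · obtain ⟨T, hAT, hE, hTcl⟩ := exists_max_theory (Γ := Γ)
                  (insert Z ↑A) {X} (by
                  intro e he ⟨C, hC, hd⟩
                  rcases he with rfl
                  refine hZA (hd.W ?_)
                  intro x hx
                  rcases hC hx with h | h
                  · exact h ▸ Finset.mem_insert_self _ _
                  · exact Finset.mem_insert_of_mem h)
                exact ⟨T, (Set.subset_insert Z ↑A).trans hAT, hE X rfl, hTcl,
                  Or.inl (hAT (Set.mem_insert Z ↑A))⟩
        obtain ⟨w, hwR, hwB, hwZ⟩ := hsem R ⟨_, hconst⟩ hRΓ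
        have := hwR.2 hwB
        rw [hwZ] at this; exact Bool.false_ne_true this
end

section
/- For any set Γ of F₂-formulas closed under rules (I), (W), and (HS), and any nonempty conjunction C of variables, the valuation w_C defined by w_C(X) = true iff (C ⥽ X) ∈ Γ satisfies every strict implication in Γ, and makes every conjunct of C true. -/
theorem stmt10 {σ : Type} [DecidableEq σ] (Γ : Set (F2 σ))
    (hI : ∀ X : σ, F2.imp {X} X ∈ Γ)
    (hW : ∀ (A B : Finset σ) (Y : σ), F2.imp A Y ∈ Γ → A ⊆ B → F2.imp B Y ∈ Γ)
    (hHS : ∀ (A B : Finset σ) (X Y : σ),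
      F2.imp (insert X B) Y ∈ Γ → F2.imp A X ∈ Γ → F2.imp (A ∪ B) Y ∈ Γ)
    (C : Finset σ) (hC : C.Nonempty) (wC : σ → Bool)
    (hw : ∀ X : σ, wC X = true ↔ F2.imp C X ∈ Γ) :
    (∀ (A : Finset σ) (Y : σ), F2.imp A Y ∈ Γ → (∀ x ∈ A, wC x = true) → wC Y = true) ∧
      ∀ x ∈ C, wC x = true := by
  have key : ∀ (A B : Finset σ) (Y : σ), F2.imp (A ∪ B) Y ∈ Γ →
      (∀ x ∈ A, F2.imp C x ∈ Γ) → F2.imp (C ∪ B) Y ∈ Γ := by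
    intro A
    induction A using Finset.induction_on with
    | empty =>
      intro B Y h _
      exact hW B (C ∪ B) Y (by simpa using h) Finset.subset_union_right
    | @insert X A hX ih =>
      intro B Y h hall
      have h1 : F2.imp (insert X (A ∪ B)) Y ∈ Γ := by
        simpa [Finset.insert_union] using h
      have h2 : F2.imp (C ∪ (A ∪ B)) Y ∈ Γ :=
        hHS C (A ∪ B) X Y h1 (hall X (Finset.mem_insert_self X A))
      have h3 : F2.imp (A ∪ (C ∪ B)) Y ∈ Γ := by
        apply hW _ _ _ h2
        intro x hx
        simp only [Finset.mem_union] at hx ⊢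
        tauto
      have h4 := ih (C ∪ B) Y h3 (fun x hx => hall x (Finset.mem_insert_of_mem hx))
      apply hW _ _ _ h4
      intro x hx
      simp only [Finset.mem_union] at hx ⊢
      tauto
  constructor
  · intro A Y hA hall
    rw [hw]
    have := key A C Y (hW A (A ∪ C) Y hA Finset.subset_union_left)
      (fun x hx => (hw x).mp (hall x hx))
    apply hW _ _ _ this
    intro x hx
    simpa using hx
  · intro x hx
    rw [hw]
    exact hW {x} C x (hI x) (Finset.singleton_subset_iff.mpr hx)
end

section
/- For any set Γ of F₁-formulas closed under rules (I) and (HS), and variables X and Z, the valuation w_{X,Z} defined by w_{X,Z}(U) = true iff (X ⥽ U) ∈ Γ or (Z ⥽ U) ∈ Γ satisfies every strict implication in Γ, and makes both X and Z true. -/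
theorem stmt11 {σ : Type} (Γ : Set (F1 σ))
    (hI : ∀ U : σ, F1.imp U U ∈ Γ)
    (hHS : ∀ U V W : σ, F1.imp U V ∈ Γ → F1.imp V W ∈ Γ → F1.imp U W ∈ Γ)
    (X Z : σ) (wXZ : σ → Bool)
    (hw : ∀ U : σ, wXZ U = true ↔ (F1.imp X U ∈ Γ ∨ F1.imp Z U ∈ Γ)) :
    (∀ U V : σ, F1.imp U V ∈ Γ → wXZ U = true → wXZ V = true) ∧
      wXZ X = true ∧ wXZ Z = true := by
  refine ⟨fun U V hUV hU => ?_, (hw X).2 (Or.inl (hI X)), (hw Z).2 (Or.inr (hI Z))⟩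
  rcases (hw U).1 hU with h | h
  · exact (hw V).2 (Or.inl (hHS X U V h hUV))
  · exact (hw V).2 (Or.inr (hHS Z U V h hUV))
end
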